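/- Let G be a simple graph on n vertices with maximum degree at most d, let δ > 0, and let S₁, S₂ be disjoint nonempty subsets of V with cut conductance φ_G(Sᵢ) < δ for i = 1, 2 and |S₁| + |S₂| ≤ 2n/3. Let Π be the orthogonal projection onto the span of the eigenvectors of the lazy random walk matrix M with eigenvalue greater than 1 − 4δ. Let 0 < θ ≤ 1/48 and for i = 1, 2 let Tᵢ ⊆ Sᵢ be nonempty with |Tᵢ| ≥ (1 − θ)|Sᵢ|. Then for every α ∈ [0, 1] and every β ∈ {1 − α, −(1 − α)}, ‖αΠq_{T₁}⁰ + βΠq_{T₂}⁰‖ ≥ (1/√12 − 2√θ)/√(|S₁| + |S₂|); in particular, for every ε < (1/√12 − 2√θ)/√(|S₁| + |S₂|), the vectors Πq_{T₁}⁰ and Πq_{T₂}⁰ are ε-far from collinear. -/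

import Mathlib

open scoped RealInnerProductSpace

open scoped Classical in
/-- The lazy random walk matrix of a graph `G` with degree parameter `d`. -/
noncomputable def lazyWalk {n : ℕ} (G : SimpleGraph (Fin n)) (d : ℕ) :
    Matrix (Fin n) (Fin n) ℝ :=
  Matrix.of fun u v =>
    if u = v then 1 - ((G.neighborSet u).ncard : ℝ) / (2 * d)
    else if G.Adj u v then 1 / (2 * d) else 0

/-- `G` has maximum degree at most `d`. -/
def MaxDegreeLE {n : ℕ} (G : SimpleGraph (Fin n)) (d : ℕ) : Prop :=
  ∀ v, (G.neighborSet v).ncard ≤ d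

/-- `p_u^t`: the endpoint distribution of a length-`t` lazy random walk from `u`. -/
noncomputable def pvec {n : ℕ} (G : SimpleGraph (Fin n)) (d t : ℕ) (u : Fin n) :
    EuclideanSpace ℝ (Fin n) :=
  WithLp.toLp 2 fun v => ((lazyWalk G d ^ t).mulVec fun w => if w = u then 1 else 0) v

/-- `q_u^t = p_u^t - (1/n) 𝟙`. -/
noncomputable def qvec {n : ℕ} (G : SimpleGraph (Fin n)) (d t : ℕ) (u : Fin n) :
    EuclideanSpace ℝ (Fin n) :=
  WithLp.toLp 2 fun v => pvec G d t u v - 1 / n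

/-- `q_u^0 = 1_u - (1/n) 𝟙`. -/
noncomputable def qzero {n : ℕ} (u : Fin n) : EuclideanSpace ℝ (Fin n) :=
  WithLp.toLp 2 fun v : Fin n => ((if v = u then 1 else 0) - 1 / n : ℝ)

/-- average of `q_u^0` over `u ∈ S`. -/
noncomputable def qavg {n : ℕ} (S : Finset (Fin n)) : EuclideanSpace ℝ (Fin n) :=
  (S.card : ℝ)⁻¹ • ∑ u ∈ S, qzero u

/-- `a` and `b` are `ε`-close to collinear. -/
def CloseCollinear {E : Type*} [NormedAddCommGroup E] [NormedSpace ℝ E]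
    (ε : ℝ) (a b : E) : Prop :=
  ∃ (ea eb w : E) (s s' : ℝ),
    ‖ea‖ ≤ ε ∧ ‖eb‖ ≤ ε ∧ a + ea = s • w ∧ b + eb = s' • w

/-- `a` and `b` are `ε`-close to antipodal. -/
def CloseAntipodal {E : Type*} [NormedAddCommGroup E] [NormedSpace ℝ E]
    (ε : ℝ) (a b : E) : Prop :=
  ∃ (ea eb w : E) (s s' : ℝ), 0 ≤ s ∧ 0 ≤ s' ∧
    ‖ea‖ ≤ ε ∧ ‖eb‖ ≤ ε ∧ a + ea = s • w ∧ b + eb = -(s' • w)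

/-- `a` and `b` are `ε`-close to podal. -/
def ClosePodal {E : Type*} [NormedAddCommGroup E] [NormedSpace ℝ E]
    (ε : ℝ) (a b : E) : Prop :=
  ∃ (ea eb w : E) (s s' : ℝ), 0 ≤ s ∧ 0 ≤ s' ∧
    ‖ea‖ ≤ ε ∧ ‖eb‖ ≤ ε ∧ a + ea = s • w ∧ b + eb = s' • w

/-- The Gram matrix `A_{u,v}` of two vectors. -/
noncomputable def gram2 {n : ℕ} (a b : EuclideanSpace ℝ (Fin n)) :
    Matrix (Fin 2) (Fin 2) ℝ :=
  !![‖a‖ ^ 2, ⟪a, b⟫; ⟪b, a⟫, ‖b‖ ^ 2]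

/-- Number of edges of `G` between `S` and `C \ S` (for `S ⊆ C`). -/
noncomputable def cutEdgesIn {n : ℕ} (G : SimpleGraph (Fin n)) (C S : Finset (Fin n)) : ℕ :=
  {p : Fin n × Fin n | p.1 ∈ S ∧ p.2 ∈ C ∧ p.2 ∉ S ∧ G.Adj p.1 p.2}.ncard

/-- Number of edges of `G` between `S` and its complement. -/
noncomputable def cutEdges {n : ℕ} (G : SimpleGraph (Fin n)) (S : Finset (Fin n)) : ℕ :=
  cutEdgesIn G Finset.univ S

/-- The cut conductance `φ_G(S) = e(S, V∖S) / (d|S|)`. -/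
noncomputable def cutCond {n : ℕ} (G : SimpleGraph (Fin n)) (d : ℕ) (S : Finset (Fin n)) : ℝ :=
  (cutEdges G S : ℝ) / (d * S.card)

/-- The (inner) conductance of the induced subgraph `G[C]` is at least `φ`. -/
def InnerConductanceGE {n : ℕ} (G : SimpleGraph (Fin n)) (d : ℕ) (C : Finset (Fin n))
    (φ : ℝ) : Prop :=
  ∀ S ⊆ C, S.Nonempty → 2 * S.card ≤ C.card →
    φ ≤ (cutEdgesIn G C S : ℝ) / (d * S.card)

/-- `G` is `(2, φ)`-clusterable. -/
def Clusterable2 {n : ℕ} (G : SimpleGraph (Fin n)) (d : ℕ) (φ : ℝ) : Prop :=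
  InnerConductanceGE G d Finset.univ φ ∨
  ∃ C₁ C₂ : Finset (Fin n), C₁.Nonempty ∧ C₂.Nonempty ∧ Disjoint C₁ C₂ ∧
    C₁ ∪ C₂ = Finset.univ ∧ InnerConductanceGE G d C₁ φ ∧ InnerConductanceGE G d C₂ φ

/-- `G` is `ε`-far from `(2, φ)`-clusterable. -/
def FarFromClusterable2 {n : ℕ} (G : SimpleGraph (Fin n)) (d : ℕ) (ε φ : ℝ) : Prop :=
  ∀ G' : SimpleGraph (Fin n), MaxDegreeLE G' d →
    ((symmDiff G.edgeSet G'.edgeSet).ncard : ℝ) ≤ ε * d * n →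
    ¬ Clusterable2 G' d φ

/-- The span of the eigenvectors of `M` with eigenvalue greater than `c`. -/
noncomputable def heavySpace {n : ℕ} (M : Matrix (Fin n) (Fin n) ℝ) (c : ℝ) :
    Submodule ℝ (EuclideanSpace ℝ (Fin n)) :=
  ⨆ μ : {μ : ℝ // c < μ}, Module.End.eigenspace (Matrix.toEuclideanLin M) (μ : ℝ)

/-- Orthogonal projection onto the span of the eigenvectors of `M` with eigenvalue
greater than `c`. -/
noncomputable def heavyProj {n : ℕ} (M : Matrix (Fin n) (Fin n) ℝ) (c : ℝ)
    (x : EuclideanSpace ℝ (Fin n)) : EuclideanSpace ℝ (Fin n) :=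
  (Submodule.orthogonalProjection (heavySpace M c) x : EuclideanSpace ℝ (Fin n))

section helpers

lemma euclid_inner {n : ℕ} (v w : EuclideanSpace ℝ (Fin n)) : ⟪v, w⟫ = ∑ i, v i * w i := by
  simp [PiLp.inner_apply, mul_comm]

open scoped Classical in
lemma ncard_neighbor {n : ℕ} (G : SimpleGraph (Fin n)) (v : Fin n) :
    ((G.neighborSet v).ncard : ℝ) = ∑ u, if G.Adj v u then (1:ℝ) else 0 := by
  rw [Set.ncard_eq_toFinset_card']
  have h : (G.neighborSet v).toFinset = Finset.univ.filter (fun u => G.Adj v u) := by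
    ext u; rw [Set.mem_toFinset]; simp
  rw [h, Finset.sum_boole]

open scoped Classical in
lemma lazyWalk_entry {n : ℕ} (G : SimpleGraph (Fin n)) (d : ℕ) (v u : Fin n) :
    lazyWalk G d v u = (if v = u then 1 else 0) -
      (1/(2*(d:ℝ))) * ((if v = u then ((G.neighborSet v).ncard : ℝ) else 0) -
        (if G.Adj v u then 1 else 0)) := by
  simp only [lazyWalk, Matrix.of_apply]
  by_cases h : v = u
  · subst h
    simp [G.irrefl]
    ring
  · simp only [if_neg h]
    by_cases ha : G.Adj v u <;> simp [ha]

lemma lazyWalk_symmMat {n : ℕ} (G : SimpleGraph (Fin n)) (d : ℕ) :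
    (lazyWalk G d).IsHermitian := by
  ext u v
  simp only [lazyWalk, Matrix.conjTranspose_apply, Matrix.of_apply, star_trivial]
  by_cases h : u = v
  · subst h; simp
  · rw [if_neg h, if_neg (Ne.symm h)]
    by_cases ha : G.Adj u v
    · rw [if_pos ha, if_pos ha.symm]
    · rw [if_neg ha, if_neg (fun h' => ha h'.symm)]

lemma lazyWalk_isSymmetric {n : ℕ} (G : SimpleGraph (Fin n)) (d : ℕ) :
    (Matrix.toEuclideanLin (lazyWalk G d)).IsSymmetric :=
  Matrix.isHermitian_iff_isSymmetric.mp (lazyWalk_symmMat G d)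

open scoped Classical in
lemma lazyWalk_quad {n d : ℕ} (hd : 1 ≤ d) (G : SimpleGraph (Fin n))
    (x : EuclideanSpace ℝ (Fin n)) :
    ⟪x, Matrix.toEuclideanLin (lazyWalk G d) x⟫ =
      ⟪x, x⟫ - (1/(4*d)) * ∑ v, ∑ u, (if G.Adj v u then (x v - x u)^2 else 0) := by
  have hd0 : (d:ℝ) ≠ 0 := by
    simp only [ne_eq, Nat.cast_eq_zero]; omega
  have hinner : ⟪x, Matrix.toEuclideanLin (lazyWalk G d) x⟫ =
      ∑ v, ∑ u, lazyWalk G d v u * (x v * x u) := by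
    rw [euclid_inner]
    apply Finset.sum_congr rfl
    intro v _
    have h0 : (Matrix.toEuclideanLin (lazyWalk G d) x) v = ∑ u, lazyWalk G d v u * x u := rfl
    rw [h0, Finset.mul_sum]
    apply Finset.sum_congr rfl
    intro u _
    ring
  rw [hinner]
  have hsplit : ∀ v, ∑ u, lazyWalk G d v u * (x v * x u) =
      x v * x v - (1/(2*(d:ℝ))) * ∑ u, (if G.Adj v u then x v * x v - x v * x u else 0) := by
    intro v
    have e1 : ∑ u, lazyWalk G d v u * (x v * x u) =
        ∑ u, ((if v = u then x v * x u else 0) -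
          (1/(2*(d:ℝ))) * ((if v = u then ((G.neighborSet v).ncard : ℝ) * (x v * x u) else 0) -
            (if G.Adj v u then x v * x u else 0))) := by
      apply Finset.sum_congr rfl
      intro u _
      rw [lazyWalk_entry]
      by_cases h : v = u <;> by_cases ha : G.Adj v u <;> simp [h, ha] <;> ring
    rw [e1, Finset.sum_sub_distrib, ← Finset.mul_sum, Finset.sum_sub_distrib]
    simp only [Finset.sum_ite_eq, Finset.mem_univ, if_true]
    rw [ncard_neighbor]
    have e2 : ((∑ u, if G.Adj v u then (1:ℝ) else 0) * (x v * x v) -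
        ∑ u, (if G.Adj v u then x v * x u else 0)) =
        ∑ u, (if G.Adj v u then x v * x v - x v * x u else 0) := by
      rw [Finset.sum_mul, ← Finset.sum_sub_distrib]
      apply Finset.sum_congr rfl
      intro u _
      by_cases h : G.Adj v u <;> simp [h]
    rw [e2]
  have e3 : ∑ v, ∑ u, lazyWalk G d v u * (x v * x u) =
      (∑ v, x v * x v) - (1/(2*(d:ℝ))) *
        ∑ v, ∑ u, (if G.Adj v u then x v * x v - x v * x u else 0) := by
    rw [Finset.mul_sum, ← Finset.sum_sub_distrib]
    apply Finset.sum_congr rfl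
    intro v _
    exact hsplit v
  rw [e3, euclid_inner]
  have hsym2 : ∑ v, ∑ u, (if G.Adj v u then (x v - x u)^2 else 0) =
      2 * ∑ v, ∑ u, (if G.Adj v u then x v * x v - x v * x u else 0) := by
    have h1 : ∀ v u : Fin n, (if G.Adj v u then (x v - x u)^2 else 0) =
        (if G.Adj v u then x v * x v - x v * x u else 0) +
        (if G.Adj u v then x u * x u - x u * x v else 0) := by
      intro v u
      by_cases h : G.Adj v u
      · rw [if_pos h, if_pos h, if_pos h.symm]; ring
      · rw [if_neg h, if_neg h, if_neg (fun h' => h h'.symm)]; ring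
    simp_rw [h1]
    simp only [Finset.sum_add_distrib]
    rw [Finset.sum_comm (f := fun v u => if G.Adj u v then x u * x u - x u * x v else 0)]
    ring
  rw [hsym2]
  ring

lemma spec_main {n : ℕ} (M : Matrix (Fin n) (Fin n) ℝ)
    (hsym : (Matrix.toEuclideanLin M).IsSymmetric)
    (hle : ∀ z : EuclideanSpace ℝ (Fin n), ⟪z, Matrix.toEuclideanLin M z⟫ ≤ ⟪z, z⟫)
    (c : ℝ) (x : EuclideanSpace ℝ (Fin n)) :
    (1 - c) * ‖x - heavyProj M c x‖^2 ≤ ⟪x, x⟫ - ⟪x, Matrix.toEuclideanLin M x⟫ := by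
  classical
  set T := Matrix.toEuclideanLin M with hT
  have hn : Module.finrank ℝ (EuclideanSpace ℝ (Fin n)) = n := finrank_euclideanSpace_fin
  set B := hsym.eigenvectorBasis hn with hB
  set μ := hsym.eigenvalues hn with hμ
  have hBev : ∀ i, T (B i) = μ i • B i := fun i => hsym.apply_eigenvectorBasis hn i
  have hrepr : ∀ v i, B.repr (T v) i = μ i * B.repr v i := fun v i =>
    hsym.eigenvectorBasis_apply_self_apply hn v i
  have hinner : ∀ (v w : EuclideanSpace ℝ (Fin n)), ⟪v, w⟫ = ∑ i, B.repr v i * B.repr w i := by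
    intro v w
    rw [← B.repr.inner_map_map v w, euclid_inner]
  have hμ1 : ∀ i, μ i ≤ 1 := by
    intro i
    have h1 := hle (B i)
    rw [hBev i, real_inner_smul_right, real_inner_self_eq_norm_sq, B.orthonormal.1 i] at h1
    simpa using h1
  set w : EuclideanSpace ℝ (Fin n) := B.repr.symm (WithLp.toLp 2 (fun i => if c < μ i then B.repr x i else 0))
    with hw
  have hwrepr : ∀ i, B.repr w i = if c < μ i then B.repr x i else 0 := by
    intro i; rw [hw]; simp
  have hwmem : w ∈ heavySpace M c := by
    rw [hw, ← B.sum_repr_symm]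
    apply Submodule.sum_mem
    intro i _
    by_cases h : c < μ i
    · simp only [h, if_true]
      apply Submodule.smul_mem
      exact le_iSup (fun μ' : {μ' : ℝ // c < μ'} =>
        Module.End.eigenspace T (μ' : ℝ)) ⟨μ i, h⟩ (hsym.hasEigenvector_eigenvectorBasis hn i).1
    · simp [h]
  have hzmem : x - w ∈ (heavySpace M c)ᗮ := by
    have hzrepr : x - w = B.repr.symm (WithLp.toLp 2 (fun i => if c < μ i then 0 else B.repr x i)) := by
      apply B.repr.injective
      ext i
      simp only [map_sub, LinearIsometryEquiv.apply_symm_apply]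
      rw [PiLp.sub_apply, hwrepr i]
      by_cases h : c < μ i <;> simp [h]
    rw [hzrepr, ← B.sum_repr_symm]
    apply Submodule.sum_mem
    intro i _
    by_cases h : c < μ i
    · simp [h]
    · simp only [h, if_false]
      apply Submodule.smul_mem
      rw [Submodule.mem_orthogonal]
      intro u hu
      refine Submodule.iSup_induction _ (motive := fun u => ⟪u, B i⟫ = 0) hu ?_ ?_ ?_
      · rintro ⟨ν, hν⟩ v hv
        have hne : (ν : ℝ) ≠ μ i := by
          intro hEq; rw [hEq] at hν; exact h hν
        exact hsym.orthogonalFamily_eigenspaces hne ⟨v, hv⟩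
          ⟨B i, (hsym.hasEigenvector_eigenvectorBasis hn i).1⟩
      · simp
      · intro a b ha hb; rw [inner_add_left, ha, hb, add_zero]
  have hproj : heavyProj M c x = w := by
    have hx : x = w + (x - w) := by abel
    rw [heavyProj]
    conv_lhs => rw [hx]
    rw [map_add, Submodule.coe_add, Submodule.orthogonalProjectionOnto_apply_of_mem_orthogonal hzmem,
      Submodule.coe_orthogonalProjectionOnto_apply, Submodule.starProjection_eq_self_iff.mpr hwmem]
    simp
  have hnormz : ‖x - heavyProj M c x‖^2 = ∑ i, (if c < μ i then 0 else B.repr x i)^2 := by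
    rw [hproj, ← real_inner_self_eq_norm_sq, hinner]
    apply Finset.sum_congr rfl
    intro i _
    rw [map_sub, PiLp.sub_apply, hwrepr i]
    by_cases h : c < μ i <;> simp [h] <;> ring
  have hrhs : ⟪x, x⟫ - ⟪x, T x⟫ = ∑ i, (1 - μ i) * (B.repr x i)^2 := by
    rw [hinner, hinner, ← Finset.sum_sub_distrib]
    apply Finset.sum_congr rfl
    intro i _
    rw [hrepr]
    ring
  rw [hnormz, hrhs, Finset.mul_sum]
  apply Finset.sum_le_sum
  intro i _
  by_cases h : c < μ i
  · simp only [h, if_true]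
    have := hμ1 i
    nlinarith [sq_nonneg (B.repr x i)]
  · simp only [h, if_false]
    push_neg at h
    nlinarith [sq_nonneg (B.repr x i)]

lemma qavg_apply {n : ℕ} (S : Finset (Fin n)) (hS : S.Nonempty) (v : Fin n) :
    qavg S v = (if v ∈ S then ((S.card : ℝ))⁻¹ else 0) - 1/n := by
  classical
  have hc : (S.card : ℝ) ≠ 0 := by
    simp [Finset.card_eq_zero, hS.ne_empty]
  have h1 : (∑ u ∈ S, qzero u) v = ∑ u ∈ S, ((if v = u then (1:ℝ) else 0) - 1/n) := by
    rw [WithLp.ofLp_sum, Finset.sum_apply]; rfl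
  have h2 : qavg S v = (S.card : ℝ)⁻¹ * (∑ u ∈ S, qzero u) v := rfl
  rw [h2, h1, Finset.sum_sub_distrib, Finset.sum_const, Finset.sum_ite_eq S v (fun _ => (1:ℝ))]
  by_cases h : v ∈ S <;> simp only [h, if_true, if_false, nsmul_eq_mul] <;> field_simp <;> ring

lemma inner_qavg {n : ℕ} (hn : 0 < n) (S S' : Finset (Fin n)) (hS : S.Nonempty)
    (hS' : S'.Nonempty) :
    ⟪qavg S, qavg S'⟫ = ((S ∩ S').card : ℝ)/(S.card * S'.card) - 1/n := by
  classical
  have hnR : (n : ℝ) ≠ 0 := by positivity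
  have hc : (S.card : ℝ) ≠ 0 := by simp [Finset.card_eq_zero, hS.ne_empty]
  have hc' : (S'.card : ℝ) ≠ 0 := by simp [Finset.card_eq_zero, hS'.ne_empty]
  rw [euclid_inner]
  have hterm : ∀ v, qavg S v * qavg S' v =
      (if v ∈ S ∩ S' then ((S.card:ℝ)⁻¹ * (S'.card:ℝ)⁻¹) else 0)
      - (1/n) * (if v ∈ S then ((S.card:ℝ))⁻¹ else 0)
      - (1/n) * (if v ∈ S' then ((S'.card:ℝ))⁻¹ else 0) + 1/(n:ℝ)^2 := by
    intro v
    rw [qavg_apply S hS, qavg_apply S' hS']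
    by_cases h : v ∈ S <;> by_cases h' : v ∈ S' <;>
      simp [h, h', Finset.mem_inter] <;> ring
  simp_rw [hterm]
  rw [Finset.sum_add_distrib, Finset.sum_sub_distrib, Finset.sum_sub_distrib]
  rw [← Finset.mul_sum, ← Finset.mul_sum]
  rw [Finset.sum_ite_mem, Finset.sum_ite_mem, Finset.sum_ite_mem]
  simp only [Finset.univ_inter, Finset.sum_const, nsmul_eq_mul, Finset.card_univ,
    Fintype.card_fin]
  field_simp
  ring

lemma norm_qavg_sq {n : ℕ} (hn : 0 < n) (S : Finset (Fin n)) (hS : S.Nonempty) :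
    ‖qavg S‖^2 = 1/(S.card:ℝ) - 1/n := by
  have hc : (S.card : ℝ) ≠ 0 := by simp [Finset.card_eq_zero, hS.ne_empty]
  rw [← real_inner_self_eq_norm_sq, inner_qavg hn S S hS hS, Finset.inter_self]
  field_simp

lemma inner_qavg_disjoint {n : ℕ} (hn : 0 < n) (S S' : Finset (Fin n)) (hS : S.Nonempty)
    (hS' : S'.Nonempty) (hd : Disjoint S S') :
    ⟪qavg S, qavg S'⟫ = - (1/n) := by
  rw [inner_qavg hn S S' hS hS', Finset.disjoint_iff_inter_eq_empty.mp hd]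
  simp

lemma norm_qavg_sub_sq {n : ℕ} (hn : 0 < n) (T S : Finset (Fin n)) (hT : T.Nonempty)
    (hS : S.Nonempty) (hTS : T ⊆ S) :
    ‖qavg T - qavg S‖^2 = 1/(T.card:ℝ) - 1/S.card := by
  have hc : (T.card : ℝ) ≠ 0 := by simp [Finset.card_eq_zero, hT.ne_empty]
  have hc' : (S.card : ℝ) ≠ 0 := by simp [Finset.card_eq_zero, hS.ne_empty]
  rw [norm_sub_sq_real, ← real_inner_self_eq_norm_sq, ← real_inner_self_eq_norm_sq]
  rw [inner_qavg hn T T hT hT, inner_qavg hn T S hT hS, inner_qavg hn S S hS hS]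
  rw [Finset.inter_self, Finset.inter_self, Finset.inter_eq_left.mpr hTS]
  field_simp
  ring

open scoped Classical in
lemma cutEdges_eq_sum {n : ℕ} (G : SimpleGraph (Fin n)) (S : Finset (Fin n)) :
    (cutEdges G S : ℝ) =
      ∑ v, ∑ u, (if v ∈ S ∧ u ∉ S ∧ G.Adj v u then (1:ℝ) else 0) := by
  rw [← Finset.sum_product']
  rw [Finset.sum_boole]
  norm_num
  rw [cutEdges, cutEdgesIn]
  have h : {p : Fin n × Fin n | p.1 ∈ S ∧ p.2 ∈ Finset.univ ∧ p.2 ∉ S ∧ G.Adj p.1 p.2} =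
      ↑(Finset.filter (fun p : Fin n × Fin n => p.1 ∈ S ∧ p.2 ∉ S ∧ G.Adj p.1 p.2)
        (Finset.univ ×ˢ Finset.univ)) := by
    ext p; simp
  rw [h, Set.ncard_coe_finset]
  congr 1

open scoped Classical in
lemma dirichlet_qavg {n : ℕ} (G : SimpleGraph (Fin n)) (S : Finset (Fin n)) (hS : S.Nonempty) :
    ∑ v, ∑ u, (if G.Adj v u then (qavg S v - qavg S u)^2 else 0) =
      2 * (cutEdges G S : ℝ) / (S.card:ℝ)^2 := by
  have hterm : ∀ v u, (if G.Adj v u then (qavg S v - qavg S u)^2 else 0) =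
      ((S.card:ℝ)⁻¹)^2 * ((if v ∈ S ∧ u ∉ S ∧ G.Adj v u then (1:ℝ) else 0) +
        (if u ∈ S ∧ v ∉ S ∧ G.Adj v u then (1:ℝ) else 0)) := by
    intro v u
    rw [qavg_apply S hS, qavg_apply S hS]
    by_cases ha : G.Adj v u
    · have hne : v ≠ u := G.ne_of_adj ha
      by_cases h1 : v ∈ S <;> by_cases h2 : u ∈ S <;> simp [ha, h1, h2] <;> ring
    · simp [ha]
  simp_rw [hterm, ← Finset.mul_sum, Finset.sum_add_distrib]
  have hswap : ∑ v, ∑ u, (if u ∈ S ∧ v ∉ S ∧ G.Adj v u then (1:ℝ) else 0) =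
      ∑ v, ∑ u, (if v ∈ S ∧ u ∉ S ∧ G.Adj v u then (1:ℝ) else 0) := by
    rw [Finset.sum_comm]
    apply Finset.sum_congr rfl; intro v _
    apply Finset.sum_congr rfl; intro u _
    rw [G.adj_comm]
  rw [hswap, ← cutEdges_eq_sum]
  ring

lemma heavyProj_smul_add {n : ℕ} (M : Matrix (Fin n) (Fin n) ℝ) (c : ℝ) (a b : ℝ)
    (x y : EuclideanSpace ℝ (Fin n)) :
    heavyProj M c (a • x + b • y) = a • heavyProj M c x + b • heavyProj M c y := by
  simp only [heavyProj, map_add, map_smul, Submodule.coe_add, Submodule.coe_smul]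

lemma heavyProj_pyth {n : ℕ} (M : Matrix (Fin n) (Fin n) ℝ) (c : ℝ)
    (x : EuclideanSpace ℝ (Fin n)) :
    ‖x‖^2 = ‖heavyProj M c x‖^2 + ‖x - heavyProj M c x‖^2 := by
  have h : ⟪heavyProj M c x, x - heavyProj M c x⟫ = 0 := by
    rw [real_inner_comm]
    exact Submodule.starProjection_inner_eq_zero x _ (Submodule.coe_mem _)
  have hx : x = heavyProj M c x + (x - heavyProj M c x) := by abel
  conv_lhs => rw [hx]
  rw [norm_add_sq_real, h]
  ring

lemma norm_heavyProj_le {n : ℕ} (M : Matrix (Fin n) (Fin n) ℝ) (c : ℝ)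
    (x : EuclideanSpace ℝ (Fin n)) : ‖heavyProj M c x‖ ≤ ‖x‖ := by
  have h := heavyProj_pyth M c x
  have := norm_nonneg (heavyProj M c x)
  have := norm_nonneg x
  nlinarith [sq_nonneg ‖x - heavyProj M c x‖]

set_option maxHeartbeats 1000000 in
lemma scalar_ineq (θ u : ℝ) (hθ0 : 0 < θ) (hθ1 : θ ≤ 1/48) (hu : 0 ≤ u) :
    1/Real.sqrt 12 - 2*Real.sqrt θ + Real.sqrt (θ/(1-θ)) * u ≤
      Real.sqrt (max (3*u^2/8) (1 - u^2/8) - 2/3) := by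
  have hθ1' : θ < 1 := by linarith
  set a := Real.sqrt θ with ha
  set b := Real.sqrt (1-θ) with hb
  have ha2 : a^2 = θ := Real.sq_sqrt hθ0.le
  have hb2 : b^2 = 1-θ := Real.sq_sqrt (by linarith)
  have ha0 : 0 < a := Real.sqrt_pos.mpr hθ0
  have hb0 : 0 < b := Real.sqrt_pos.mpr (by linarith)
  have hquot : Real.sqrt (θ/(1-θ)) = a/b := Real.sqrt_div hθ0.le _
  set s12 := Real.sqrt 12 with hs12
  have hs12sq : s12^2 = 12 := Real.sq_sqrt (by norm_num)
  have hs12pos : 0 < s12 := Real.sqrt_pos.mpr (by norm_num)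
  have hkey : max (3*u^2/8) (1 - u^2/8) - 2/3 ≥ 1/12 := by
    rcases le_or_gt (u^2) 2 with h | h
    · have : (1 : ℝ) - u^2/8 ≥ 3/4 := by linarith
      have := le_max_right (3*u^2/8) (1 - u^2/8)
      linarith
    · have : (3 : ℝ)*u^2/8 ≥ 3/4 := by linarith
      have := le_max_left (3*u^2/8) (1 - u^2/8)
      linarith
  rw [hquot]
  rcases le_or_gt u (2*b) with hcase | hcase
  · have h1 : a/b*u ≤ 2*a := by
      rw [div_mul_eq_mul_div, div_le_iff₀ hb0]
      nlinarith
    have h2 : 1/s12 ≤ Real.sqrt (max (3*u^2/8) (1 - u^2/8) - 2/3) := by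
      have : (1:ℝ)/s12 = Real.sqrt (1/12) := by
        rw [one_div, one_div, ← Real.sqrt_inv]
      rw [this]
      exact Real.sqrt_le_sqrt (by linarith)
    linarith
  · have hub : 2*b ≤ u := hcase.le
    have hu2 : 47/12 ≤ u^2 := by nlinarith
    have hmax : max (3*u^2/8) (1 - u^2/8) = 3*u^2/8 :=
      max_eq_left (by nlinarith)
    set s47 := Real.sqrt 47 with hs47
    have hs47sq : s47^2 = 47 := Real.sq_sqrt (by norm_num)
    have hs47pos : 0 < s47 := Real.sqrt_pos.mpr (by norm_num)
    have he1 : (2*s12*a)^2 = 4*(s12^2)*(a^2) := by ring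
    have he2 : (2*s12*b)^2 = 4*(s12^2)*(b^2) := by ring
    have hA : 2*s12*a ≤ 1 := by nlinarith [sq_nonneg (2*s12*a - 1)]
    have hB : s47 ≤ 2*s12*b := by nlinarith [sq_nonneg (s47 - 2*s12*b), mul_pos hs12pos hb0]
    have hstep1 : 1/s12 - 2*a + a/b*u = 1/s12 + a*(u/b - 2) := by
      field_simp; ring
    have hdivb : u/b - 2 ≥ 0 := by
      rw [ge_iff_le, sub_nonneg, le_div_iff₀ hb0]; linarith
    have hstep2 : a*(u/b - 2) ≤ (1/(2*s12))*(u/b - 2) := by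
      apply mul_le_mul_of_nonneg_right _ hdivb
      rw [le_div_iff₀ (by positivity)]
      linarith
    have hstep3 : u/b ≤ 2*s12*u/s47 := by
      rw [div_le_div_iff₀ hb0 hs47pos]
      nlinarith
    have hstep4 : (1/(2*s12))*(u/b - 2) ≤ u/s47 - 1/s12 := by
      have : (1/(2*s12))*(2*s12*u/s47 - 2) = u/s47 - 1/s12 := by
        field_simp
      nlinarith [mul_le_mul_of_nonneg_left hstep3 (le_of_lt (by positivity : (0:ℝ) < 1/(2*s12)))]
    have hfin : 1/s12 - 2*a + a/b*u ≤ u/s47 := by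
      rw [hstep1]; linarith
    have hlast : u/s47 ≤ Real.sqrt (max (3*u^2/8) (1 - u^2/8) - 2/3) := by
      rw [hmax]
      rw [show u/s47 = Real.sqrt ((u/s47)^2) from (Real.sqrt_sq (by positivity)).symm]
      apply Real.sqrt_le_sqrt
      rw [div_pow, hs47sq]
      rw [div_le_iff₀ (by norm_num)]
      nlinarith
    linarith

end helpers

lemma heavyProj_sub {n : ℕ} (M : Matrix (Fin n) (Fin n) ℝ) (c : ℝ)
    (x y : EuclideanSpace ℝ (Fin n)) :
    heavyProj M c (x - y) = heavyProj M c x - heavyProj M c y := by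
  simp only [heavyProj, map_sub, Submodule.coe_sub]

set_option maxHeartbeats 2000000 in
theorem part1_aux {n d : ℕ} (hd : 1 ≤ d) (G : SimpleGraph (Fin n))
    (δ : ℝ) (hδ : 0 < δ) (S₁ S₂ : Finset (Fin n)) (h1 : S₁.Nonempty) (h2 : S₂.Nonempty)
    (hdisj : Disjoint S₁ S₂)
    (hc1 : cutCond G d S₁ < δ) (hc2 : cutCond G d S₂ < δ)
    (hsize : (S₁.card + S₂.card : ℝ) ≤ 2 * n / 3)
    (θ : ℝ) (hθ0 : 0 < θ) (hθ1 : θ ≤ 1 / 48)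
    (T₁ T₂ : Finset (Fin n)) (hT1 : T₁ ⊆ S₁) (hT2 : T₂ ⊆ S₂)
    (hT1ne : T₁.Nonempty) (hT2ne : T₂.Nonempty)
    (hT1c : (1 - θ) * S₁.card ≤ T₁.card) (hT2c : (1 - θ) * S₂.card ≤ T₂.card)
    (α β : ℝ) (hα0 : 0 ≤ α) (hα1 : α ≤ 1) (hβ : β = 1 - α ∨ β = -(1 - α)) :
    (1 / Real.sqrt 12 - 2 * Real.sqrt θ) / Real.sqrt (S₁.card + S₂.card) ≤
      ‖α • heavyProj (lazyWalk G d) (1 - 4 * δ) (qavg T₁) +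
        β • heavyProj (lazyWalk G d) (1 - 4 * δ) (qavg T₂)‖ := by
  classical
  obtain ⟨v0, _⟩ := h1.exists_mem
  have hn : 0 < n := v0.pos
  have hnR : (0:ℝ) < n := by exact_mod_cast hn
  have hθ1' : θ < 1 := by linarith only [hθ1]
  set s1 : ℝ := (S₁.card : ℝ) with hs1def
  set s2 : ℝ := (S₂.card : ℝ) with hs2def
  have hs1 : 0 < s1 := by
    rw [hs1def]; exact_mod_cast Finset.card_pos.mpr h1
  have hs2 : 0 < s2 := by
    rw [hs2def]; exact_mod_cast Finset.card_pos.mpr h2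
  set σ : ℝ := s1 + s2 with hσdef
  have hσ : 0 < σ := by rw [hσdef]; linarith only [hs1, hs2]
  have h1n : 1/(n:ℝ) ≤ 2/(3*σ) := by
    rw [div_le_div_iff₀ hnR (by linarith only [hσ])]
    rw [hσdef]
    linarith only [hsize]
  have hdR : 0 < (d:ℝ) := by exact_mod_cast hd
  -- quadratic form upper bound
  have hle : ∀ z : EuclideanSpace ℝ (Fin n),
      ⟪z, Matrix.toEuclideanLin (lazyWalk G d) z⟫ ≤ ⟪z, z⟫ := by
    intro z
    rw [lazyWalk_quad hd]
    have hsum : (0:ℝ) ≤ ∑ v, ∑ u, (if G.Adj v u then (z v - z u)^2 else 0) := by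
      apply Finset.sum_nonneg; intro v _
      apply Finset.sum_nonneg; intro u _
      by_cases h : G.Adj v u <;> simp [h] <;> positivity
    have hpos : (0:ℝ) ≤ (1/(4*(d:ℝ))) * ∑ v, ∑ u, (if G.Adj v u then (z v - z u)^2 else 0) :=
      mul_nonneg (by positivity) hsum
    linarith only [hpos]
  -- projection error bound for S sets
  have projbound : ∀ (S : Finset (Fin n)), S.Nonempty → cutCond G d S < δ →
      ‖qavg S - heavyProj (lazyWalk G d) (1 - 4*δ) (qavg S)‖^2 ≤ 1/(8*(S.card:ℝ)) := by
    intro S hS hcS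
    set s : ℝ := (S.card : ℝ) with hsdef
    have hs : 0 < s := by rw [hsdef]; exact_mod_cast Finset.card_pos.mpr hS
    have hspec := spec_main (lazyWalk G d) (lazyWalk_isSymmetric G d) hle (1-4*δ) (qavg S)
    have hqf : ⟪qavg S, qavg S⟫ - ⟪qavg S, Matrix.toEuclideanLin (lazyWalk G d) (qavg S)⟫ =
        (1/(4*(d:ℝ))) * (2 * (cutEdges G S : ℝ) / s^2) := by
      rw [lazyWalk_quad hd, dirichlet_qavg G S hS]
      ring
    have hcut : (cutEdges G S : ℝ) < δ * ((d:ℝ) * s) := by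
      rw [cutCond] at hcS
      exact (div_lt_iff₀ (by positivity)).mp hcS
    have hq2 : (1/(4*(d:ℝ))) * (2 * (cutEdges G S : ℝ) / s^2) ≤ δ/(2*s) := by
      rw [show (1/(4*(d:ℝ))) * (2 * (cutEdges G S : ℝ) / s^2) =
        (cutEdges G S : ℝ)/(2*(d:ℝ)*s^2) by ring]
      rw [div_le_div_iff₀ (by positivity) (by positivity)]
      have hmul := mul_le_mul_of_nonneg_right hcut.le (by positivity : (0:ℝ) ≤ 2*s)
      nlinarith only [hmul]
    have h4δ : (0:ℝ) < 4*δ := by linarith only [hδ]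
    have hfin : 4*δ * ‖qavg S - heavyProj (lazyWalk G d) (1 - 4*δ) (qavg S)‖^2 ≤ δ/(2*s) := by
      calc 4*δ * ‖qavg S - heavyProj (lazyWalk G d) (1 - 4*δ) (qavg S)‖^2
          = (1 - (1-4*δ)) * ‖qavg S - heavyProj (lazyWalk G d) (1 - 4*δ) (qavg S)‖^2 := by ring
        _ ≤ ⟪qavg S, qavg S⟫ - ⟪qavg S, Matrix.toEuclideanLin (lazyWalk G d) (qavg S)⟫ := hspec
        _ = (1/(4*(d:ℝ))) * (2 * (cutEdges G S : ℝ) / s^2) := hqf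
        _ ≤ δ/(2*s) := hq2
    have he : δ/(2*s) = 4*δ * (1/(8*s)) := by field_simp; ring
    rw [he] at hfin
    exact le_of_mul_le_mul_left hfin h4δ
  -- difference bound for T vs S
  have diffbound : ∀ (T S : Finset (Fin n)), T.Nonempty → S.Nonempty → T ⊆ S →
      (1 - θ) * (S.card:ℝ) ≤ T.card →
      ‖qavg T - qavg S‖ ≤ Real.sqrt (θ/(1-θ)) / Real.sqrt (S.card:ℝ) := by
    intro T S hT hS hTS hTc
    set s : ℝ := (S.card : ℝ) with hsdef
    set t : ℝ := (T.card : ℝ) with htdef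
    have hs : 0 < s := by rw [hsdef]; exact_mod_cast Finset.card_pos.mpr hS
    have ht : 0 < t := by rw [htdef]; exact_mod_cast Finset.card_pos.mpr hT
    have h1θ : 0 < 1 - θ := by linarith only [hθ1']
    have hsq : ‖qavg T - qavg S‖^2 ≤ θ/((1-θ)*s) := by
      rw [norm_qavg_sub_sq hn T S hT hS hTS, ← hsdef, ← htdef]
      rw [div_sub_div _ _ (ne_of_gt ht) (ne_of_gt hs), div_le_div_iff₀
        (by positivity) (by positivity)]
      have hint := mul_le_mul_of_nonneg_right hTc hs.le
      nlinarith only [hint, hθ0, hs, ht]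
    calc ‖qavg T - qavg S‖ = Real.sqrt (‖qavg T - qavg S‖^2) :=
          (Real.sqrt_sq (norm_nonneg _)).symm
      _ ≤ Real.sqrt (θ/((1-θ)*s)) := Real.sqrt_le_sqrt hsq
      _ = Real.sqrt (θ/(1-θ)) / Real.sqrt s := by
          rw [← div_div, Real.sqrt_div (by positivity)]
  -- abbreviations
  set q1 := qavg S₁ with hq1d
  set q2 := qavg S₂ with hq2d
  set t1 := qavg T₁ with ht1d
  set t2 := qavg T₂ with ht2d
  set Pq1 := heavyProj (lazyWalk G d) (1 - 4*δ) q1 with hPq1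
  set Pq2 := heavyProj (lazyWalk G d) (1 - 4*δ) q2 with hPq2
  set Pt1 := heavyProj (lazyWalk G d) (1 - 4*δ) t1 with hPt1
  set Pt2 := heavyProj (lazyWalk G d) (1 - 4*δ) t2 with hPt2
  have habs : |β| = 1 - α := by
    rcases hβ with h | h <;> subst h
    · exact abs_of_nonneg (by linarith only [hα1])
    · rw [abs_neg]; exact abs_of_nonneg (by linarith only [hα1])
  have hβ2 : β^2 = (1-α)^2 := by
    rw [← sq_abs, habs]
  have hαβ : (α+β)^2 ≤ 1 := by
    have hmul : 0 ≤ α * (1-α) := mul_nonneg hα0 (by linarith only [hα1])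
    rcases hβ with h | h <;> subst h <;> nlinarith only [hmul, hα0, hα1]
  set A : ℝ := α / Real.sqrt s1 with hA
  set B : ℝ := (1-α) / Real.sqrt s2 with hB
  have hrs1 : Real.sqrt s1 > 0 := Real.sqrt_pos.mpr hs1
  have hrs2 : Real.sqrt s2 > 0 := Real.sqrt_pos.mpr hs2
  have hrσ : Real.sqrt σ > 0 := Real.sqrt_pos.mpr hσ
  have hA0 : 0 ≤ A := by rw [hA]; positivity
  have hB0 : 0 ≤ B := by
    rw [hB]; apply div_nonneg (by linarith only [hα1]) hrs2.le
  have hA2 : A^2 = α^2/s1 := by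
    rw [hA, div_pow, Real.sq_sqrt hs1.le]
  have hB2 : B^2 = (1-α)^2/s2 := by
    rw [hB, div_pow, Real.sq_sqrt hs2.le]
  set u : ℝ := (A+B) * Real.sqrt σ with hu
  have hu0 : 0 ≤ u := by
    rw [hu]; exact mul_nonneg (by linarith only [hA0, hB0]) hrσ.le
  have hu2 : u^2 = (A+B)^2 * σ := by
    rw [hu, mul_pow, Real.sq_sqrt hσ.le]
  clear_value u B A σ s2 s1
  set y := α • q1 + β • q2 with hy
  -- norm of y
  have hy2 : ‖y‖^2 = α^2/s1 + β^2/s2 - (α+β)^2 * (1/n) := by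
    have e : ‖y‖^2 = α^2*‖q1‖^2 + 2*(α*β)*⟪q1,q2⟫ + β^2*‖q2‖^2 := by
      rw [hy, norm_add_sq_real, norm_smul, norm_smul, real_inner_smul_left,
        real_inner_smul_right]
      simp only [Real.norm_eq_abs, mul_pow, sq_abs]
      ring
    rw [e, hq1d, hq2d, norm_qavg_sq hn S₁ h1, norm_qavg_sq hn S₂ h2,
      inner_qavg_disjoint hn S₁ S₂ h1 h2 hdisj, ← hs1def, ← hs2def]
    ring
  have hyge : A^2 + B^2 - 2/(3*σ) ≤ ‖y‖^2 := by
    rw [hy2, hA2, hB2, hβ2]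
    have h2' : (α+β)^2 * (1/n) ≤ 2/(3*σ) := by
      calc (α+β)^2 * (1/n) ≤ 1 * (1/n) := by
            apply mul_le_mul_of_nonneg_right hαβ (by positivity)
        _ = 1/(n:ℝ) := by ring
        _ ≤ 2/(3*σ) := h1n
    linarith only [h2']
  -- projection of y
  have hPyeq : heavyProj (lazyWalk G d) (1 - 4*δ) y = α • Pq1 + β • Pq2 := by
    rw [hy, heavyProj_smul_add, hPq1, hPq2]
  have hyP : ‖y - heavyProj (lazyWalk G d) (1 - 4*δ) y‖ ≤ (A+B)/Real.sqrt 8 := by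
    have hdec : y - heavyProj (lazyWalk G d) (1 - 4*δ) y =
        α • (q1 - Pq1) + β • (q2 - Pq2) := by
      rw [hPyeq, hy]
      module
    rw [hdec]
    have hb1 : ‖q1 - Pq1‖ ≤ Real.sqrt (1/(8*s1)) := by
      have h := projbound S₁ h1 hc1
      rw [← hs1def, ← hq1d, ← hPq1] at h
      have h' := Real.sqrt_le_sqrt h
      rwa [Real.sqrt_sq (norm_nonneg _)] at h'
    have hb2 : ‖q2 - Pq2‖ ≤ Real.sqrt (1/(8*s2)) := by
      have h := projbound S₂ h2 hc2
      rw [← hs2def, ← hq2d, ← hPq2] at h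
      have h' := Real.sqrt_le_sqrt h
      rwa [Real.sqrt_sq (norm_nonneg _)] at h'
    have hsqrt8 : Real.sqrt (8:ℝ) > 0 := Real.sqrt_pos.mpr (by norm_num)
    have he1 : Real.sqrt (1/(8*s1)) = 1/(Real.sqrt 8 * Real.sqrt s1) := by
      rw [show (1:ℝ)/(8*s1) = (8*s1)⁻¹ by ring, Real.sqrt_inv, Real.sqrt_mul (by norm_num)]
      ring
    have he2 : Real.sqrt (1/(8*s2)) = 1/(Real.sqrt 8 * Real.sqrt s2) := by
      rw [show (1:ℝ)/(8*s2) = (8*s2)⁻¹ by ring, Real.sqrt_inv, Real.sqrt_mul (by norm_num)]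
      ring
    calc ‖α • (q1 - Pq1) + β • (q2 - Pq2)‖
        ≤ ‖α • (q1 - Pq1)‖ + ‖β • (q2 - Pq2)‖ := norm_add_le _ _
      _ = α * ‖q1 - Pq1‖ + (1-α) * ‖q2 - Pq2‖ := by
          rw [norm_smul, norm_smul, Real.norm_eq_abs, Real.norm_eq_abs, habs,
            abs_of_nonneg hα0]
      _ ≤ α * (1/(Real.sqrt 8 * Real.sqrt s1)) + (1-α) * (1/(Real.sqrt 8 * Real.sqrt s2)) := by
          apply add_le_add
          · apply mul_le_mul_of_nonneg_left (he1 ▸ hb1) hα0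
          · apply mul_le_mul_of_nonneg_left (he2 ▸ hb2) (by linarith only [hα1])
      _ = (A+B)/Real.sqrt 8 := by
          rw [hA, hB]
          ring
  -- max bound
  have hmax23 : (0:ℝ) ≤ max (3*u^2/8) (1 - u^2/8) - 2/3 := by
    rcases le_or_gt (u^2) 2 with h | h
    · have h2' := le_max_right (3*u^2/8) (1 - u^2/8)
      linarith only [h, h2']
    · have h2' := le_max_left (3*u^2/8) (1 - u^2/8)
      linarith only [h, h2']
  have hABsum : 1/σ ≤ A^2 + B^2 := by
    rw [hA2, hB2, hσdef]
    rw [div_add_div _ _ (ne_of_gt hs1) (ne_of_gt hs2), div_le_div_iff₀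
      (by linarith only [hs1, hs2]) (by positivity)]
    nlinarith only [sq_nonneg (α*s2 - (1-α)*s1)]
  have hPy2 : (max (3*u^2/8) (1 - u^2/8) - 2/3)/σ ≤
      ‖heavyProj (lazyWalk G d) (1 - 4*δ) y‖^2 := by
    have hpyth := heavyProj_pyth (lazyWalk G d) (1 - 4*δ) y
    have hyPsq : ‖y - heavyProj (lazyWalk G d) (1 - 4*δ) y‖^2 ≤ (A+B)^2/8 := by
      have h := pow_le_pow_left₀ (norm_nonneg _) hyP 2
      rwa [div_pow, Real.sq_sqrt (by norm_num : (0:ℝ) ≤ 8)] at h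
    have hlb : A^2 + B^2 - 2/(3*σ) - (A+B)^2/8 ≤
        ‖heavyProj (lazyWalk G d) (1 - 4*δ) y‖^2 := by
      linarith only [hpyth, hyge, hyPsq]
    have hcases : (max (3*u^2/8) (1 - u^2/8) - 2/3)/σ ≤ A^2 + B^2 - 2/(3*σ) - (A+B)^2/8 := by
      have h1σ : 2/(3*σ) * σ = 2/3 := by field_simp
      have hQ : 1 ≤ (A^2+B^2) * σ := by
        have := (div_le_iff₀ hσ).mp hABsum
        linarith only [this]
      rcases max_cases (3*u^2/8) (1 - u^2/8) with ⟨heq, _⟩ | ⟨heq, _⟩ <;> rw [heq] <;>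
        rw [div_le_iff₀ hσ, hu2]
      · nlinarith only [mul_nonneg (sq_nonneg (A-B)) hσ.le, h1σ]
      · nlinarith only [hQ, h1σ]
    linarith only [hlb, hcases]
  have hPyfin : Real.sqrt (max (3*u^2/8) (1 - u^2/8) - 2/3)/Real.sqrt σ ≤
      ‖heavyProj (lazyWalk G d) (1 - 4*δ) y‖ := by
    have h := Real.sqrt_le_sqrt hPy2
    rwa [Real.sqrt_sq (norm_nonneg _), Real.sqrt_div hmax23 σ] at h
  -- error term
  have herr : α * ‖t1 - q1‖ + (1-α) * ‖t2 - q2‖ ≤ Real.sqrt (θ/(1-θ)) * (A+B) := by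
    have h1' := diffbound T₁ S₁ hT1ne h1 hT1 (by rw [← hs1def]; exact hT1c)
    have h2' := diffbound T₂ S₂ hT2ne h2 hT2 (by rw [← hs2def]; exact hT2c)
    rw [← hs1def, ← ht1d, ← hq1d] at h1'
    rw [← hs2def, ← ht2d, ← hq2d] at h2'
    have e : Real.sqrt (θ/(1-θ)) * (A+B) =
        α * (Real.sqrt (θ/(1-θ)) / Real.sqrt s1) +
        (1-α) * (Real.sqrt (θ/(1-θ)) / Real.sqrt s2) := by
      rw [hA, hB]; ring
    rw [e]
    apply add_le_add
    · exact mul_le_mul_of_nonneg_left h1' hα0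
    · exact mul_le_mul_of_nonneg_left h2' (by linarith only [hα1])
  -- relate the two projections
  have htri : ‖heavyProj (lazyWalk G d) (1 - 4*δ) y‖ ≤ ‖α • Pt1 + β • Pt2‖ +
      (α * ‖t1 - q1‖ + (1-α) * ‖t2 - q2‖) := by
    have hdiff : heavyProj (lazyWalk G d) (1 - 4*δ) y - (α • Pt1 + β • Pt2) =
        α • (Pq1 - Pt1) + β • (Pq2 - Pt2) := by
      rw [hPyeq]; module
    have hd1 : ‖Pq1 - Pt1‖ ≤ ‖t1 - q1‖ := by
      rw [hPq1, hPt1, ← heavyProj_sub]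
      calc ‖heavyProj (lazyWalk G d) (1-4*δ) (q1 - t1)‖ ≤ ‖q1 - t1‖ := norm_heavyProj_le _ _ _
        _ = ‖t1 - q1‖ := norm_sub_rev _ _
    have hd2 : ‖Pq2 - Pt2‖ ≤ ‖t2 - q2‖ := by
      rw [hPq2, hPt2, ← heavyProj_sub]
      calc ‖heavyProj (lazyWalk G d) (1-4*δ) (q2 - t2)‖ ≤ ‖q2 - t2‖ := norm_heavyProj_le _ _ _
        _ = ‖t2 - q2‖ := norm_sub_rev _ _
    have hstep : ‖heavyProj (lazyWalk G d) (1 - 4*δ) y - (α • Pt1 + β • Pt2)‖ ≤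
        α * ‖t1 - q1‖ + (1-α) * ‖t2 - q2‖ := by
      rw [hdiff]
      calc ‖α • (Pq1 - Pt1) + β • (Pq2 - Pt2)‖
          ≤ ‖α • (Pq1 - Pt1)‖ + ‖β • (Pq2 - Pt2)‖ := norm_add_le _ _
        _ = α * ‖Pq1 - Pt1‖ + (1-α) * ‖Pq2 - Pt2‖ := by
            rw [norm_smul, norm_smul, Real.norm_eq_abs, Real.norm_eq_abs, habs,
              abs_of_nonneg hα0]
        _ ≤ α * ‖t1 - q1‖ + (1-α) * ‖t2 - q2‖ := by
            apply add_le_add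
            · exact mul_le_mul_of_nonneg_left hd1 hα0
            · exact mul_le_mul_of_nonneg_left hd2 (by linarith only [hα1])
    calc ‖heavyProj (lazyWalk G d) (1 - 4*δ) y‖
        = ‖(α • Pt1 + β • Pt2) + (heavyProj (lazyWalk G d) (1 - 4*δ) y -
            (α • Pt1 + β • Pt2))‖ := by rw [add_sub_cancel]
      _ ≤ ‖α • Pt1 + β • Pt2‖ + ‖heavyProj (lazyWalk G d) (1 - 4*δ) y -
            (α • Pt1 + β • Pt2)‖ := norm_add_le _ _
      _ ≤ _ := by linarith only [hstep]
  -- final assembly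
  have hscal := scalar_ineq θ u hθ0 hθ1 hu0
  have huσ : Real.sqrt (θ/(1-θ)) * (A+B) = Real.sqrt (θ/(1-θ)) * u / Real.sqrt σ := by
    rw [hu, mul_div_assoc, mul_div_assoc, div_self (ne_of_gt hrσ), mul_one]
  have hdiv : (1/Real.sqrt 12 - 2*Real.sqrt θ)/Real.sqrt σ +
      Real.sqrt (θ/(1-θ)) * (A+B) ≤
      Real.sqrt (max (3*u^2/8) (1 - u^2/8) - 2/3)/Real.sqrt σ := by
    rw [huσ, ← add_div]
    exact (div_le_div_iff_of_pos_right hrσ).mpr (by linarith only [hscal])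
  have hgoal : (1/Real.sqrt 12 - 2*Real.sqrt θ)/Real.sqrt σ ≤ ‖α • Pt1 + β • Pt2‖ := by
    linarith only [hdiv, hPyfin, htri, herr]
  exact hgoal

theorem stmt14 {n d : ℕ} (hd : 1 ≤ d) (G : SimpleGraph (Fin n)) (hdeg : MaxDegreeLE G d)
    (δ : ℝ) (hδ : 0 < δ) (S₁ S₂ : Finset (Fin n)) (h1 : S₁.Nonempty) (h2 : S₂.Nonempty)
    (hdisj : Disjoint S₁ S₂)
    (hc1 : cutCond G d S₁ < δ) (hc2 : cutCond G d S₂ < δ)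
    (hsize : (S₁.card + S₂.card : ℝ) ≤ 2 * n / 3)
    (θ : ℝ) (hθ0 : 0 < θ) (hθ1 : θ ≤ 1 / 48)
    (T₁ T₂ : Finset (Fin n)) (hT1 : T₁ ⊆ S₁) (hT2 : T₂ ⊆ S₂)
    (hT1ne : T₁.Nonempty) (hT2ne : T₂.Nonempty)
    (hT1c : (1 - θ) * S₁.card ≤ T₁.card) (hT2c : (1 - θ) * S₂.card ≤ T₂.card) :
    (∀ α β : ℝ, 0 ≤ α → α ≤ 1 → (β = 1 - α ∨ β = -(1 - α)) →
      (1 / Real.sqrt 12 - 2 * Real.sqrt θ) / Real.sqrt (S₁.card + S₂.card) ≤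
        ‖α • heavyProj (lazyWalk G d) (1 - 4 * δ) (qavg T₁) +
          β • heavyProj (lazyWalk G d) (1 - 4 * δ) (qavg T₂)‖) ∧
    (∀ ε : ℝ, ε < (1 / Real.sqrt 12 - 2 * Real.sqrt θ) / Real.sqrt (S₁.card + S₂.card) →
      ¬ CloseCollinear ε (heavyProj (lazyWalk G d) (1 - 4 * δ) (qavg T₁))
        (heavyProj (lazyWalk G d) (1 - 4 * δ) (qavg T₂))) := by
  have main : ∀ α β : ℝ, 0 ≤ α → α ≤ 1 → (β = 1 - α ∨ β = -(1 - α)) →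
      (1 / Real.sqrt 12 - 2 * Real.sqrt θ) / Real.sqrt (S₁.card + S₂.card) ≤
        ‖α • heavyProj (lazyWalk G d) (1 - 4 * δ) (qavg T₁) +
          β • heavyProj (lazyWalk G d) (1 - 4 * δ) (qavg T₂)‖ := fun α β hα0 hα1 hβ =>
    part1_aux hd G δ hδ S₁ S₂ h1 h2 hdisj hc1 hc2 hsize θ hθ0 hθ1 T₁ T₂ hT1 hT2
      hT1ne hT2ne hT1c hT2c α β hα0 hα1 hβ
  refine ⟨main, ?_⟩
  intro ε hε hC
  obtain ⟨ea, eb, w, s, s', hea, heb, ha, hb⟩ := hC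
  set a := heavyProj (lazyWalk G d) (1 - 4 * δ) (qavg T₁) with hadef
  set b := heavyProj (lazyWalk G d) (1 - 4 * δ) (qavg T₂) with hbdef
  have ha' : a = s • w - ea := eq_sub_of_add_eq ha
  have hb' : b = s' • w - eb := eq_sub_of_add_eq hb
  by_cases hs0 : s = 0
  · have hbound := main 1 0 (by norm_num) le_rfl (Or.inl (by norm_num))
    have hnorm : ‖(1:ℝ) • a + (0:ℝ) • b‖ = ‖a‖ := by
      rw [one_smul, zero_smul, add_zero]
    rw [hnorm] at hbound
    have : ‖a‖ ≤ ε := by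
      rw [ha', hs0, zero_smul, zero_sub, norm_neg]
      exact hea
    linarith only [hbound, hε, this]
  by_cases hs'0 : s' = 0
  · have hbound := main 0 1 le_rfl (by norm_num) (Or.inl (by norm_num))
    have hnorm : ‖(0:ℝ) • a + (1:ℝ) • b‖ = ‖b‖ := by
      rw [one_smul, zero_smul, zero_add]
    rw [hnorm] at hbound
    have : ‖b‖ ≤ ε := by
      rw [hb', hs'0, zero_smul, zero_sub, norm_neg]
      exact heb
    linarith only [hbound, hε, this]
  · set α : ℝ := |s'| / (|s| + |s'|) with hαdef
    set β : ℝ := -(α * s / s') with hβdef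
    have habs_s : 0 < |s| := abs_pos.mpr hs0
    have habs_s' : 0 < |s'| := abs_pos.mpr hs'0
    have hD : 0 < |s| + |s'| := by linarith only [habs_s, habs_s']
    have hα0 : 0 ≤ α := by rw [hαdef]; positivity
    have hα1 : α ≤ 1 := by
      rw [hαdef, div_le_one hD]
      linarith only [habs_s]
    have hβabs : |β| = 1 - α := by
      rw [hβdef, abs_neg, abs_div, abs_mul, abs_of_nonneg hα0, hαdef]
      field_simp [ne_of_gt habs_s', ne_of_gt hD]
      ring
    have hβor : β = 1 - α ∨ β = -(1 - α) := by
      rcases abs_eq (by linarith only [hα1] : (0:ℝ) ≤ 1 - α) |>.mp hβabs with h | h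
      · exact Or.inl h
      · exact Or.inr h
    have hbound := main α β hα0 hα1 hβor
    have hsum0 : α * s + β * s' = 0 := by
      rw [hβdef]
      field_simp
      ring
    have hz : α • a + β • b = -(α • ea + β • eb) := by
      rw [ha', hb']
      have : α • (s • w - ea) + β • (s' • w - eb) =
          (α * s + β * s') • w - (α • ea + β • eb) := by
        module
      rw [this, hsum0, zero_smul, zero_sub]
    have hnle : ‖α • a + β • b‖ ≤ ε := by
      rw [hz, norm_neg]
      calc ‖α • ea + β • eb‖ ≤ ‖α • ea‖ + ‖β • eb‖ := norm_add_le _ _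
        _ = α * ‖ea‖ + (1-α) * ‖eb‖ := by
            rw [norm_smul, norm_smul, Real.norm_eq_abs, Real.norm_eq_abs,
              abs_of_nonneg hα0, hβabs]
        _ ≤ α * ε + (1-α) * ε := by
            apply add_le_add
            · exact mul_le_mul_of_nonneg_left hea hα0
            · exact mul_le_mul_of_nonneg_left heb (by linarith only [hα1])
        _ = ε := by ring
    linarith only [hbound, hε, hnle]
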